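/- Let (J, |·|_J) be a normed ideal in which the finite rank operators R are dense in the J-norm. If τ = (T_1,...,T_n) and τ' = (T_1',...,T_n') are n-tuples of bounded operators with T_j − T_j' ∈ J for all j, then k_J(τ) = k_J(τ'). -/

import Mathlib

open Filter ContinuousLinearMap
open scoped ENNReal

variable {H : Type} [NormedAddCommGroup H] [InnerProductSpace ℂ H] [CompleteSpace H]

/-- A finite rank operator. -/
def FinRank (A : H →L[ℂ] H) : Prop := FiniteDimensional ℂ (LinearMap.range A.toLinearMap)

/-- A normed ideal of compact operators, presented through its (possibly infinite) norm. -/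
structure NormedIdeal (H : Type) [NormedAddCommGroup H] [InnerProductSpace ℂ H]
    [CompleteSpace H] where
  ν : (H →L[ℂ] H) → ℝ≥0∞
  ν_zero : ν 0 = 0
  ν_add : ∀ X Y, ν (X + Y) ≤ ν X + ν Y
  ν_smul : ∀ (c : ℂ) X, ν (c • X) = (‖c‖₊ : ℝ≥0∞) * ν X
  ν_mul : ∀ A X B, ν (A * X * B) ≤ (‖A‖₊ : ℝ≥0∞) * ν X * (‖B‖₊ : ℝ≥0∞)
  compact : ∀ X, ν X ≠ ⊤ → IsCompactOperator X

/-- `max_j |[A, T_j]|_J`. -/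
noncomputable def commSup (J : NormedIdeal H) {n : ℕ} (τ : Fin n → H →L[ℂ] H)
    (A : H →L[ℂ] H) : ℝ≥0∞ :=
  ⨆ j, J.ν (A * τ j - τ j * A)

/-- `A_m ∈ R_1^+`, `A_m ↑ I` strongly. -/
def ApproxUnit (A : ℕ → H →L[ℂ] H) : Prop :=
  (∀ m, FinRank (A m) ∧ 0 ≤ A m ∧ A m ≤ 1) ∧ Monotone A ∧
    ∀ x : H, Tendsto (fun m => A m x) atTop (nhds x)

/-- The quasicentral modulus `k_J(τ)`. -/
noncomputable def qcMod (J : NormedIdeal H) {n : ℕ} (τ : Fin n → H →L[ℂ] H) : ℝ≥0∞ :=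
  sInf {C | ∃ A, ApproxUnit A ∧ Tendsto (fun m => commSup J τ (A m)) atTop (nhds C)}

/-- An orthogonal projection. -/
def IsProj' (P : H →L[ℂ] H) : Prop := IsSelfAdjoint P ∧ P * P = P

/-- The condenser quasicentral modulus `k_J(τ; P, Q)`. -/
noncomputable def qcModCond (J : NormedIdeal H) {n : ℕ} (τ : Fin n → H →L[ℂ] H)
    (P Q : H →L[ℂ] H) : ℝ≥0∞ :=
  sInf {c | ∃ A : H →L[ℂ] H, FinRank A ∧ 0 ≤ A ∧ A ≤ 1 ∧ A * P = P ∧ A * Q = 0 ∧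
    c = commSup J τ A}

section Aux

variable (J : NormedIdeal H)

lemma nu_neg (X : H →L[ℂ] H) : J.ν (-X) = J.ν X := by
  rw [← neg_one_smul ℂ X, J.ν_smul]; simp

lemma nu_le_peel (X Y : H →L[ℂ] H) : J.ν X ≤ J.ν Y + J.ν (X - Y) := by
  calc J.ν X = J.ν (Y + (X - Y)) := by rw [add_sub_cancel]
  _ ≤ J.ν Y + J.ν (X - Y) := J.ν_add _ _

lemma enorm_one_le : (‖(1 : H →L[ℂ] H)‖₊ : ℝ≥0∞) ≤ 1 := by
  have h : ‖(1 : H →L[ℂ] H)‖ ≤ 1 := by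
    simpa [ContinuousLinearMap.one_def] using ContinuousLinearMap.norm_id_le (𝕜 := ℂ) (E := H)
  have h2 : ‖(1 : H →L[ℂ] H)‖₊ ≤ 1 := by
    rw [← NNReal.coe_le_coe]; simpa using h
  exact_mod_cast h2

lemma nu_mul_left (A X : H →L[ℂ] H) : J.ν (A * X) ≤ (‖A‖₊ : ℝ≥0∞) * J.ν X := by
  have := J.ν_mul A X 1
  rw [mul_one] at this
  refine this.trans ?_
  calc (‖A‖₊ : ℝ≥0∞) * J.ν X * (‖(1 : H →L[ℂ] H)‖₊ : ℝ≥0∞)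
      ≤ (‖A‖₊ : ℝ≥0∞) * J.ν X * 1 := by gcongr; exact enorm_one_le
  _ = (‖A‖₊ : ℝ≥0∞) * J.ν X := by rw [mul_one]

lemma nu_mul_right (X B : H →L[ℂ] H) : J.ν (X * B) ≤ J.ν X * (‖B‖₊ : ℝ≥0∞) := by
  have := J.ν_mul 1 X B
  rw [one_mul] at this
  refine this.trans ?_
  calc (‖(1 : H →L[ℂ] H)‖₊ : ℝ≥0∞) * J.ν X * (‖B‖₊ : ℝ≥0∞)
      ≤ 1 * J.ν X * (‖B‖₊ : ℝ≥0∞) := by gcongr; exact enorm_one_le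
  _ = J.ν X * (‖B‖₊ : ℝ≥0∞) := by rw [one_mul]

/-- Strong convergence to `0` is uniform after composing with a projection onto a
finite-dimensional subspace. -/
lemma opnorm_comp_proj_tendsto (S : Submodule ℂ H) [FiniteDimensional ℂ S]
    (B : ℕ → H →L[ℂ] H) (hB : ∀ x, Tendsto (fun m => B m x) atTop (nhds 0)) :
    Tendsto (fun m => ‖B m ∘L (S.subtypeL ∘L S.orthogonalProjectionOnto)‖) atTop (nhds 0) := by
  set b := stdOrthonormalBasis ℂ S with hb
  have hbound : ∀ m, ‖B m ∘L (S.subtypeL ∘L S.orthogonalProjectionOnto)‖ ≤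
      ∑ i, ‖B m ((b i : H))‖ := by
    intro m
    refine ContinuousLinearMap.opNorm_le_bound _ (by positivity) (fun x => ?_)
    set z : S := S.orthogonalProjectionOnto x with hz
    have hzx : ‖(z : H)‖ ≤ ‖x‖ := by
      have h1 : ‖z‖ ≤ ‖S.orthogonalProjectionOnto‖ * ‖x‖ := (S.orthogonalProjectionOnto).le_opNorm x
      have h2 : ‖S.orthogonalProjectionOnto‖ * ‖x‖ ≤ 1 * ‖x‖ := by
        gcongr; exact Submodule.orthogonalProjectionOnto_norm_le S
      simpa using h1.trans h2
    have hrepr : (z : H) = ∑ i, (inner ℂ (b i) z : ℂ) • ((b i : H)) := by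
      conv_lhs => rw [← b.sum_repr' z]
      push_cast
      rfl
    have happ : (B m ∘L (S.subtypeL ∘L S.orthogonalProjectionOnto)) x
        = ∑ i, (inner ℂ (b i) z : ℂ) • B m ((b i : H)) := by
      simp only [ContinuousLinearMap.comp_apply, Submodule.subtypeL_apply, ← hz]
      rw [hrepr, map_sum]
      simp [ContinuousLinearMap.map_smul]
    rw [happ]
    calc ‖∑ i, (inner ℂ (b i) z : ℂ) • B m ((b i : H))‖
        ≤ ∑ i, ‖(inner ℂ (b i) z : ℂ) • B m ((b i : H))‖ := norm_sum_le _ _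
    _ ≤ ∑ i, ‖B m ((b i : H))‖ * ‖x‖ := by
        refine Finset.sum_le_sum fun i _ => ?_
        rw [norm_smul, mul_comm]
        gcongr
        calc ‖(inner ℂ (b i) z : ℂ)‖ ≤ ‖b i‖ * ‖z‖ := norm_inner_le_norm _ _
        _ ≤ 1 * ‖x‖ := by
            gcongr
            · exact le_of_eq (b.orthonormal.1 i)
            · exact hzx
        _ = ‖x‖ := one_mul _
    _ = (∑ i, ‖B m ((b i : H))‖) * ‖x‖ := by rw [Finset.sum_mul]
  have hsum : Tendsto (fun m => ∑ i, ‖B m ((b i : H))‖) atTop (nhds 0) := by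
    rw [show (0 : ℝ) = ∑ _i : Fin (Module.finrank ℂ S), (0:ℝ) by simp]
    exact tendsto_finset_sum _ fun i _ => by
      simpa using (hB ((b i : H))).norm
  exact squeeze_zero (fun m => norm_nonneg _) hbound hsum

lemma tendsto_nu_left (F : H →L[ℂ] H) (hF : FinRank F) (hνF : J.ν F ≠ ⊤)
    (B : ℕ → H →L[ℂ] H) (hB : ∀ x, Tendsto (fun m => B m x) atTop (nhds 0)) :
    Tendsto (fun m => J.ν (B m * F)) atTop (nhds 0) := by
  haveI : FiniteDimensional ℂ (LinearMap.range F.toLinearMap) := hF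
  set S := LinearMap.range F.toLinearMap with hS
  set P : H →L[ℂ] H := S.subtypeL ∘L S.orthogonalProjectionOnto with hP
  have hPF : ∀ x, P (F x) = F x := by
    intro x
    have hx : F x ∈ S := LinearMap.mem_range_self _ x
    show (↑(S.orthogonalProjectionOnto (F x)) : H) = F x
    rw [show F x = ((⟨F x, hx⟩ : S) : H) from rfl,
      Submodule.orthogonalProjectionOnto_mem_subspace_eq_self]
  have hcomp : ∀ m, B m * F = (B m ∘L P) * F := by
    intro m; ext x
    show B m (F x) = B m (P (F x))
    rw [hPF]
  have hle : ∀ m, J.ν (B m * F) ≤ (‖B m ∘L P‖₊ : ℝ≥0∞) * J.ν F := by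
    intro m
    rw [hcomp m]
    exact nu_mul_left J _ _
  have hnorm : Tendsto (fun m => ‖B m ∘L P‖) atTop (nhds 0) :=
    opnorm_comp_proj_tendsto S B hB
  have hcoe : Tendsto (fun m => ((‖B m ∘L P‖₊ : ℝ≥0∞))) atTop (nhds 0) := by
    have := ENNReal.tendsto_ofReal hnorm
    simpa [ofReal_norm, enorm_eq_nnnorm] using this
  have hprod : Tendsto (fun m => (‖B m ∘L P‖₊ : ℝ≥0∞) * J.ν F) atTop (nhds 0) := by
    have := ENNReal.Tendsto.mul_const hcoe (Or.inr hνF)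
    simpa using this
  exact tendsto_of_tendsto_of_tendsto_of_le_of_le tendsto_const_nhds hprod
    (fun m => zero_le) hle

lemma tendsto_nu_right (F : H →L[ℂ] H) (hF : FinRank F) (hνF : J.ν F ≠ ⊤)
    (B : ℕ → H →L[ℂ] H) (hB : ∀ x, Tendsto (fun m => B m x) atTop (nhds 0))
    (hsa : ∀ m, IsSelfAdjoint (B m)) :
    Tendsto (fun m => J.ν (F * B m)) atTop (nhds 0) := by
  haveI : FiniteDimensional ℂ (LinearMap.range F.toLinearMap) := hF
  set S := LinearMap.range F.toLinearMap with hS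
  set P : H →L[ℂ] H := S.subtypeL ∘L S.orthogonalProjectionOnto with hP
  have hPF : ∀ x, P (F x) = F x := by
    intro x
    have hx : F x ∈ S := LinearMap.mem_range_self _ x
    show (↑(S.orthogonalProjectionOnto (F x)) : H) = F x
    rw [show F x = ((⟨F x, hx⟩ : S) : H) from rfl,
      Submodule.orthogonalProjectionOnto_mem_subspace_eq_self]
  have hPsa : IsSelfAdjoint P := isSelfAdjoint_starProjection S
  -- the range of the adjoint is finite dimensional
  set W := LinearMap.range (ContinuousLinearMap.adjoint F).toLinearMap with hW
  have hadjP : ∀ y, ContinuousLinearMap.adjoint F y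
      = ContinuousLinearMap.adjoint F (P y) := by
    intro y
    have h1 : P ∘L F = F := by ext x; exact hPF x
    conv_lhs => rw [← h1]
    rw [ContinuousLinearMap.adjoint_comp, hPsa.adjoint_eq]
    rfl
  haveI : FiniteDimensional ℂ W := by
    have hle : W ≤ Submodule.map (ContinuousLinearMap.adjoint F).toLinearMap S := by
      rintro _ ⟨y, rfl⟩
      refine ⟨P y, ?_, (hadjP y).symm⟩
      show (↑(S.orthogonalProjectionOnto y) : H) ∈ S
      exact (S.orthogonalProjectionOnto y).2
    haveI : FiniteDimensional ℂ
        (Submodule.map (ContinuousLinearMap.adjoint F).toLinearMap S) :=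
      Module.Finite.map S (ContinuousLinearMap.adjoint F).toLinearMap
    exact Submodule.finiteDimensional_of_le hle
  set Q : H →L[ℂ] H := W.subtypeL ∘L W.orthogonalProjectionOnto with hQ
  have hQsa : IsSelfAdjoint Q := isSelfAdjoint_starProjection W
  have hFQ : ∀ x, F (Q x) = F x := by
    intro x
    have hv : x - Q x ∈ Wᗮ := Submodule.sub_starProjection_mem_orthogonal (K := W) x
    have hFv : F (x - Q x) = 0 := by
      have h1 : (inner ℂ (ContinuousLinearMap.adjoint F (F (x - Q x))) (x - Q x) : ℂ)
          = inner ℂ (F (x - Q x)) (F (x - Q x)) :=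
        ContinuousLinearMap.adjoint_inner_left F _ _
      have h2 : (inner ℂ (ContinuousLinearMap.adjoint F (F (x - Q x))) (x - Q x) : ℂ) = 0 :=
        (Submodule.mem_orthogonal W _).mp hv _ (LinearMap.mem_range_self _ _)
      rw [h2] at h1
      exact inner_self_eq_zero.mp h1.symm
    have := map_sub F x (Q x)
    rw [hFv] at this
    exact (sub_eq_zero.mp this.symm).symm
  have hcomp : ∀ m, F * B m = F * (Q ∘L B m) := by
    intro m; ext x
    show F (B m x) = F (Q (B m x))
    rw [hFQ]
  have hle : ∀ m, J.ν (F * B m) ≤ J.ν F * (‖Q ∘L B m‖₊ : ℝ≥0∞) := by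
    intro m
    rw [hcomp m]
    exact nu_mul_right J _ _
  have hnormeq : ∀ m, ‖Q ∘L B m‖ = ‖B m ∘L Q‖ := by
    intro m
    have h1 : ContinuousLinearMap.adjoint (B m ∘L Q) = Q ∘L B m := by
      rw [ContinuousLinearMap.adjoint_comp, hQsa.adjoint_eq, (hsa m).adjoint_eq]
    rw [← h1]
    exact ContinuousLinearMap.adjoint.norm_map _
  have hnorm : Tendsto (fun m => ‖Q ∘L B m‖) atTop (nhds 0) := by
    have := opnorm_comp_proj_tendsto W B hB
    simpa only [hnormeq] using this
  have hcoe : Tendsto (fun m => ((‖Q ∘L B m‖₊ : ℝ≥0∞))) atTop (nhds 0) := by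
    have := ENNReal.tendsto_ofReal hnorm
    simpa [ofReal_norm, enorm_eq_nnnorm] using this
  have hprod : Tendsto (fun m => J.ν F * (‖Q ∘L B m‖₊ : ℝ≥0∞)) atTop (nhds 0) := by
    have := ENNReal.Tendsto.const_mul hcoe (Or.inr hνF)
    simpa using this
  exact tendsto_of_tendsto_of_tendsto_of_le_of_le tendsto_const_nhds hprod
    (fun m => zero_le) hle

end Aux

lemma approxUnit_selfAdjoint {A : ℕ → H →L[ℂ] H} (hA : ApproxUnit A) (m : ℕ) :
    IsSelfAdjoint (A m) :=
  ((ContinuousLinearMap.nonneg_iff_isPositive (A m)).mp (hA.1 m).2.1).isSelfAdjoint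

lemma approxUnit_norm_le {A : ℕ → H →L[ℂ] H} (hA : ApproxUnit A) (m : ℕ) :
    (‖A m‖₊ : ℝ≥0∞) ≤ 1 := by
  have h : ‖A m‖ ≤ 1 :=
    (CStarAlgebra.norm_le_norm_of_nonneg_of_le (hA.1 m).2.1 (hA.1 m).2.2).trans
      (by simpa [ContinuousLinearMap.one_def] using
        ContinuousLinearMap.norm_id_le (𝕜 := ℂ) (E := H))
  have h2 : ‖A m‖₊ ≤ 1 := by rw [← NNReal.coe_le_coe]; simpa using h
  exact_mod_cast h2

lemma approxUnit_sub_one_tendsto {A : ℕ → H →L[ℂ] H} (hA : ApproxUnit A) (x : H) :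
    Tendsto (fun m => (A m - 1) x) atTop (nhds 0) := by
  have := (hA.2.2 x).sub_const x
  simpa using this

/-- The key approximation lemma: commutators with an approximate unit of elements of `J`
tend to zero in `J`-norm. -/
lemma tendsto_nu_comm (J : NormedIdeal H)
    (hdense : ∀ X : H →L[ℂ] H, J.ν X ≠ ⊤ → ∀ ε : ℝ≥0∞, 0 < ε →
      ∃ F : H →L[ℂ] H, FinRank F ∧ J.ν (X - F) < ε)
    {A : ℕ → H →L[ℂ] H} (hA : ApproxUnit A) {X : H →L[ℂ] H} (hX : J.ν X ≠ ⊤) :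
    Tendsto (fun m => J.ν (A m * X - X * A m)) atTop (nhds 0) := by
  rw [ENNReal.tendsto_nhds_zero]
  intro ε hε
  set δ := ε / 4 with hδdef
  have hδ : 0 < δ := ENNReal.div_pos hε.ne' (by norm_num)
  obtain ⟨F, hFr, hXF⟩ := hdense X hX δ hδ
  have hνF : J.ν F ≠ ⊤ := by
    refine ne_top_of_le_ne_top ?_ (nu_le_peel J F X)
    rw [show F - X = -(X - F) by abel, nu_neg]
    exact ENNReal.add_ne_top.mpr ⟨hX, hXF.ne_top⟩
  set G := X - F with hG
  have hL1 := tendsto_nu_left J F hFr hνF (fun m => A m - 1)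
    (approxUnit_sub_one_tendsto hA)
  have hL2 := tendsto_nu_right J F hFr hνF (fun m => A m - 1)
    (approxUnit_sub_one_tendsto hA)
    (fun m => (approxUnit_selfAdjoint hA m).sub (IsSelfAdjoint.one _))
  have hE1 : ∀ᶠ m in atTop, J.ν ((A m - 1) * F) ≤ δ :=
    (ENNReal.tendsto_nhds_zero.mp hL1) δ hδ
  have hE2 : ∀ᶠ m in atTop, J.ν (F * (A m - 1)) ≤ δ :=
    (ENNReal.tendsto_nhds_zero.mp hL2) δ hδ
  filter_upwards [hE1, hE2] with m h1 h2
  have hdecomp : A m * X - X * A m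
      = (A m * G + (-(G * A m))) + ((A m - 1) * F + (-(F * (A m - 1)))) := by
    simp only [hG]
    noncomm_ring
  have hbound : J.ν (A m * X - X * A m) ≤ δ + δ + δ + δ := by
    rw [hdecomp]
    refine le_trans (J.ν_add _ _) ?_
    have ht1 : J.ν (A m * G + (-(G * A m))) ≤ δ + δ := by
      refine le_trans (J.ν_add _ _) (add_le_add ?_ ?_)
      · refine le_trans (nu_mul_left J _ _) ?_
        calc (‖A m‖₊ : ℝ≥0∞) * J.ν G ≤ 1 * J.ν G := by
              gcongr; exact approxUnit_norm_le hA m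
        _ = J.ν G := one_mul _
        _ ≤ δ := hXF.le
      · rw [nu_neg]
        refine le_trans (nu_mul_right J _ _) ?_
        calc J.ν G * (‖A m‖₊ : ℝ≥0∞) ≤ J.ν G * 1 := by
              gcongr; exact approxUnit_norm_le hA m
        _ = J.ν G := mul_one _
        _ ≤ δ := hXF.le
    have ht2 : J.ν ((A m - 1) * F + (-(F * (A m - 1)))) ≤ δ + δ := by
      refine le_trans (J.ν_add _ _) (add_le_add h1 ?_)
      rw [nu_neg]; exact h2
    refine le_trans (add_le_add ht1 ht2) (le_of_eq ?_)
    ring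
  refine hbound.trans ?_
  have : δ + δ + δ + δ = 4 * δ := by ring
  rw [this, hδdef]
  by_cases hεtop : ε = ⊤
  · simp [hεtop]
  · rw [ENNReal.mul_div_cancel' (by norm_num) (by norm_num)]

lemma commSup_le_add (J : NormedIdeal H) (A : H →L[ℂ] H) {n : ℕ}
    (τ τ' : Fin n → H →L[ℂ] H) :
    commSup J τ A ≤ commSup J τ' A
      + ∑ j, J.ν (A * (τ j - τ' j) - (τ j - τ' j) * A) := by
  refine iSup_le fun j => ?_
  have hdecomp : A * τ j - τ j * A
      = (A * τ' j - τ' j * A) + (A * (τ j - τ' j) - (τ j - τ' j) * A) := by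
    noncomm_ring
  rw [hdecomp]
  refine le_trans (J.ν_add _ _) (add_le_add ?_ ?_)
  · exact le_iSup (fun j => J.ν (A * τ' j - τ' j * A)) j
  · exact Finset.single_le_sum (f := fun j => J.ν (A * (τ j - τ' j) - (τ j - τ' j) * A))
      (fun j _ => zero_le) (Finset.mem_univ j)

lemma comm_sum_symm (J : NormedIdeal H) (A : H →L[ℂ] H) {n : ℕ}
    (τ τ' : Fin n → H →L[ℂ] H) :
    ∑ j, J.ν (A * (τ' j - τ j) - (τ' j - τ j) * A)
      = ∑ j, J.ν (A * (τ j - τ' j) - (τ j - τ' j) * A) := by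
  refine Finset.sum_congr rfl fun j _ => ?_
  rw [show A * (τ' j - τ j) - (τ' j - τ j) * A
      = -(A * (τ j - τ' j) - (τ j - τ' j) * A) by noncomm_ring, nu_neg]

lemma tendsto_commSup_congr (J : NormedIdeal H)
    (hdense : ∀ X : H →L[ℂ] H, J.ν X ≠ ⊤ → ∀ ε : ℝ≥0∞, 0 < ε →
      ∃ F : H →L[ℂ] H, FinRank F ∧ J.ν (X - F) < ε)
    {n : ℕ} {τ τ' : Fin n → H →L[ℂ] H} (h : ∀ j, J.ν (τ j - τ' j) ≠ ⊤)
    {A : ℕ → H →L[ℂ] H} (hA : ApproxUnit A) {C : ℝ≥0∞}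
    (hC : Tendsto (fun m => commSup J τ' (A m)) atTop (nhds C)) :
    Tendsto (fun m => commSup J τ (A m)) atTop (nhds C) := by
  set f : ℕ → ℝ≥0∞ := fun m => commSup J τ (A m) with hf
  set f' : ℕ → ℝ≥0∞ := fun m => commSup J τ' (A m) with hf'
  set g : ℕ → ℝ≥0∞ := fun m => ∑ j, J.ν (A m * (τ j - τ' j) - (τ j - τ' j) * A m) with hg
  have hg0 : Tendsto g atTop (nhds 0) := by
    rw [show (0:ℝ≥0∞) = ∑ _j : Fin n, (0:ℝ≥0∞) by simp]
    exact tendsto_finset_sum _ fun j _ => tendsto_nu_comm J hdense hA (h j)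
  have h1 : ∀ m, f m ≤ f' m + g m := fun m => commSup_le_add J (A m) τ τ'
  have h2 : ∀ m, f' m ≤ f m + g m := by
    intro m
    refine le_trans (commSup_le_add J (A m) τ' τ) ?_
    rw [comm_sum_symm]
  refine tendsto_of_le_liminf_of_limsup_le ?_ ?_
  · -- C ≤ liminf f
    refine ENNReal.le_of_forall_pos_le_add fun ε hε _ => ?_
    have hgε : ∀ᶠ m in atTop, g m ≤ (ε : ℝ≥0∞) :=
      (ENNReal.tendsto_nhds_zero.mp hg0) _ (by exact_mod_cast hε)
    have hev : ∀ᶠ m in atTop, f' m ≤ f m + (ε : ℝ≥0∞) := by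
      filter_upwards [hgε] with m hm
      exact (h2 m).trans (by gcongr)
    calc C = Filter.liminf f' atTop := hC.liminf_eq.symm
    _ ≤ Filter.liminf (fun m => f m + (ε : ℝ≥0∞)) atTop :=
        Filter.liminf_le_liminf hev
    _ = Filter.liminf f atTop + (ε : ℝ≥0∞) :=
        liminf_add_const atTop f _ (by isBoundedDefault) (by isBoundedDefault)
  · -- limsup f ≤ C
    have hsum : Tendsto (fun m => f' m + g m) atTop (nhds C) := by
      simpa using hC.add hg0
    calc Filter.limsup f atTop ≤ Filter.limsup (fun m => f' m + g m) atTop :=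
        Filter.limsup_le_limsup (Filter.Eventually.of_forall h1)
    _ = C := hsum.limsup_eq

/-- If the finite rank operators are dense in `J` and `τ ≡ τ'` mod `J`, then
`k_J(τ) = k_J(τ')`. -/
theorem qcMod_perturbation_invariant (J : NormedIdeal H)
    (hdense : ∀ X : H →L[ℂ] H, J.ν X ≠ ⊤ → ∀ ε : ℝ≥0∞, 0 < ε →
      ∃ F : H →L[ℂ] H, FinRank F ∧ J.ν (X - F) < ε)
    {n : ℕ} (τ τ' : Fin n → H →L[ℂ] H) (h : ∀ j, J.ν (τ j - τ' j) ≠ ⊤) :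
    qcMod J τ = qcMod J τ' := by
  unfold qcMod
  congr 1
  ext C
  constructor
  · rintro ⟨A, hA, hC⟩
    have h' : ∀ j, J.ν (τ' j - τ j) ≠ ⊤ := by
      intro j
      rw [show τ' j - τ j = -(τ j - τ' j) by abel, nu_neg]
      exact h j
    exact ⟨A, hA, tendsto_commSup_congr J hdense h' hA hC⟩
  · rintro ⟨A, hA, hC⟩
    exact ⟨A, hA, tendsto_commSup_congr J hdense h hA hC⟩
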